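/- Let b ≥ 2 be an integer base, let i₁, i₂ ≥ 0 be integers, let c be an integer with 0 ≤ c ≤ b−1, and let N₁ ≥ 1, N₂, M₁, M₂ be integers with 0 ≤ N₂ ≤ b^{i₂} − 1 and 0 ≤ M₂ ≤ b^{i₁} − 1 and M₁ ≥ 0. Set n = N₁·b^{i₂+1} + c·b^{i₂} + N₂ (the denominator, with digit c in position i₂), m = M₁·b^{i₁+1} + c·b^{i₁} + M₂ (the numerator, with digit c in position i₁), n' = N₁·b^{i₂} + N₂ (the denominator with the digit c deleted) and m' = M₁·b^{i₁} + M₂ (the numerator with the digit c deleted). Then the anomalous-cancellation identity m/n = m'/n' (as an equality of rational numbers, noting n > 0 and n' > 0) holds if and only if the linear Diophantine equation A·M₁ + B·M₂ = C holds, where A = b^{i₁}·(c·b^{i₂} − (b−1)·N₂), B = b^{i₂}·((b−1)·N₁ + c), and C = c·b^{i₁}·(N₁·b^{i₂} + N₂). -/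
import Mathlib


theorem anomalous_cancellation_iff_diophantine
    (b i₁ i₂ c N₁ N₂ M₁ M₂ : ℤ)
    (hb : 2 ≤ b) (hi₁ : 0 ≤ i₁) (hi₂ : 0 ≤ i₂)
    (hc0 : 0 ≤ c) (hc1 : c ≤ b - 1)
    (hN₁ : 1 ≤ N₁) (hN₂0 : 0 ≤ N₂) (hN₂1 : N₂ ≤ b ^ i₂.toNat - 1)
    (hM₁ : 0 ≤ M₁) (hM₂0 : 0 ≤ M₂) (hM₂1 : M₂ ≤ b ^ i₁.toNat - 1) :
    ((M₁ * b ^ (i₁.toNat + 1) + c * b ^ i₁.toNat + M₂ : ℚ) /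
        (N₁ * b ^ (i₂.toNat + 1) + c * b ^ i₂.toNat + N₂ : ℚ) =
      (M₁ * b ^ i₁.toNat + M₂ : ℚ) / (N₁ * b ^ i₂.toNat + N₂ : ℚ)) ↔
    (b ^ i₁.toNat * (c * b ^ i₂.toNat - (b - 1) * N₂)) * M₁ +
      (b ^ i₂.toNat * ((b - 1) * N₁ + c)) * M₂ =
      c * b ^ i₁.toNat * (N₁ * b ^ i₂.toNat + N₂) := by
  have hbp : (0:ℤ) < b := by linarith
  have hp1 : (0:ℤ) < b ^ i₂.toNat := pow_pos hbp _
  have hp2 : (0:ℤ) < b ^ (i₂.toNat + 1) := pow_pos hbp _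
  have hnZ : (0:ℤ) < N₁ * b ^ (i₂.toNat + 1) + c * b ^ i₂.toNat + N₂ := by
    nlinarith
  have hn'Z : (0:ℤ) < N₁ * b ^ i₂.toNat + N₂ := by nlinarith
  have hn : (N₁ * b ^ (i₂.toNat + 1) + c * b ^ i₂.toNat + N₂ : ℚ) ≠ 0 := by
    have : (0:ℚ) < ((N₁ * b ^ (i₂.toNat + 1) + c * b ^ i₂.toNat + N₂ : ℤ) : ℚ) := by
      exact_mod_cast hnZ
    push_cast at this
    linarith
  have hn' : (N₁ * b ^ i₂.toNat + N₂ : ℚ) ≠ 0 := by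
    have : (0:ℚ) < ((N₁ * b ^ i₂.toNat + N₂ : ℤ) : ℚ) := by exact_mod_cast hn'Z
    push_cast at this
    linarith
  rw [div_eq_div_iff hn hn']
  constructor
  · intro h
    have h' : (M₁ * b ^ (i₁.toNat + 1) + c * b ^ i₁.toNat + M₂) *
        (N₁ * b ^ i₂.toNat + N₂) =
        (M₁ * b ^ i₁.toNat + M₂) *
        (N₁ * b ^ (i₂.toNat + 1) + c * b ^ i₂.toNat + N₂) := by
      exact_mod_cast h
    linear_combination -h'
  · intro h
    have h' : ((b ^ i₁.toNat * (c * b ^ i₂.toNat - (b - 1) * N₂)) * M₁ +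
        (b ^ i₂.toNat * ((b - 1) * N₁ + c)) * M₂ : ℚ) =
        c * b ^ i₁.toNat * (N₁ * b ^ i₂.toNat + N₂) := by exact_mod_cast h
    linear_combination -h'
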